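/- A family of permutations of {1,...,n} (n ≥ 3) is 3-restricted minwise independent if and only if it is 3-rankwise independent. -/

import Mathlib

open Finset

private lemma perm_ne' {n : ℕ} (π : Equiv.Perm (Fin n)) {a b : Fin n} (h : a ≠ b) :
    π a ≠ π b := fun h' => h (π.injective h')

/-- Count of indices realizing the order `a < b < c`. -/
private def Cc {n d : ℕ} (π : Fin d → Equiv.Perm (Fin n)) (a b c : Fin n) : ℕ :=
  (univ.filter fun i : Fin d => π i a < π i b ∧ π i b < π i c).card

private lemma lemA {n d : ℕ} (π : Fin d → Equiv.Perm (Fin n)) {a b c : Fin n}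
    (hab : a ≠ b) (hac : a ≠ c) (hbc : b ≠ c) :
    (univ.filter fun i : Fin d => π i a < π i b).card
      = Cc π c a b + Cc π a c b + Cc π a b c := by
  classical
  simp only [Cc, Finset.card_filter, ← Finset.sum_add_distrib]
  refine Finset.sum_congr rfl fun i _ => ?_
  have h1 : ((π i) a).val ≠ ((π i) b).val :=
    fun h' => perm_ne' (π i) hab (Fin.val_injective h')
  have h2 : ((π i) a).val ≠ ((π i) c).val :=
    fun h' => perm_ne' (π i) hac (Fin.val_injective h')
  have h3 : ((π i) b).val ≠ ((π i) c).val :=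
    fun h' => perm_ne' (π i) hbc (Fin.val_injective h')
  simp only [Fin.lt_iff_val_lt_val]
  split_ifs <;> omega

private lemma lemB {n d : ℕ} (π : Fin d → Equiv.Perm (Fin n)) {a b c : Fin n}
    (hbc : b ≠ c) :
    (univ.filter fun i : Fin d => π i a < π i b ∧ π i a < π i c).card
      = Cc π a b c + Cc π a c b := by
  classical
  simp only [Cc, Finset.card_filter, ← Finset.sum_add_distrib]
  refine Finset.sum_congr rfl fun i _ => ?_
  have h3 : ((π i) b).val ≠ ((π i) c).val :=
    fun h' => perm_ne' (π i) hbc (Fin.val_injective h')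
  simp only [Fin.lt_iff_val_lt_val]
  split_ifs <;> omega

private lemma rank_C {n d : ℕ} (π : Fin d → Equiv.Perm (Fin n))
    (h : ∀ σ : Fin 3 → Fin n, Function.Injective σ →
        (Finset.univ.filter fun i : Fin d =>
          π i (σ 0) < π i (σ 1) ∧ π i (σ 1) < π i (σ 2)).card * 6 = d)
    {a b c : Fin n} (hab : a ≠ b) (hac : a ≠ c) (hbc : b ≠ c) :
    Cc π a b c * 6 = d := by
  have hinj : Function.Injective ![a, b, c] := by
    intro x y hxy
    fin_cases x <;> fin_cases y <;> simp_all
  simp only [Cc]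
  convert h _ hinj <;> rfl
theorem stmt_6 (n d : ℕ) (hn : 3 ≤ n) (π : Fin d → Equiv.Perm (Fin n)) :
    (∀ j, 1 ≤ j → j ≤ 3 → ∀ X : Finset (Fin n), X.card = j → ∀ x ∈ X,
        (Finset.univ.filter fun i : Fin d => ∀ y ∈ X, π i x ≤ π i y).card * j = d)
      ↔
    (∀ σ : Fin 3 → Fin n, Function.Injective σ →
        (Finset.univ.filter fun i : Fin d =>
          π i (σ 0) < π i (σ 1) ∧ π i (σ 1) < π i (σ 2)).card * 6 = d) := by
  classical
  constructor
  · intro h σ hσ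
    have h01 : σ 0 ≠ σ 1 := fun e => absurd (hσ e) (by decide)
    have h02 : σ 0 ≠ σ 2 := fun e => absurd (hσ e) (by decide)
    have h12 : σ 1 ≠ σ 2 := fun e => absurd (hσ e) (by decide)
    -- pair condition on {σ 1, σ 2}
    have hpair := h 2 (by norm_num) (by norm_num) {σ 1, σ 2}
      (by rw [Finset.card_insert_of_notMem (by simpa using h12)]; simp)
      (σ 1) (by simp)
    have epair : (univ.filter fun i : Fin d =>
        ∀ y ∈ ({σ 1, σ 2} : Finset (Fin n)), π i (σ 1) ≤ π i y)
        = univ.filter fun i : Fin d => π i (σ 1) < π i (σ 2) := by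
      refine Finset.filter_congr fun i _ => ?_
      simp only [Finset.mem_insert, Finset.mem_singleton, forall_eq_or_imp, forall_eq]
      constructor
      · rintro ⟨-, h2⟩; exact lt_of_le_of_ne h2 (perm_ne' (π i) h12)
      · intro hlt; exact ⟨le_refl _, le_of_lt hlt⟩
    rw [epair] at hpair
    -- triple condition on {σ 1, σ 0, σ 2}, minimized at σ 1
    have htri := h 3 (by norm_num) (by norm_num) {σ 1, σ 0, σ 2}
      (by
        rw [Finset.card_insert_of_notMem (by simp [h01.symm, h12]),
          Finset.card_insert_of_notMem (by simpa using h02)]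
        simp)
      (σ 1) (by simp)
    have etri : (univ.filter fun i : Fin d =>
        ∀ y ∈ ({σ 1, σ 0, σ 2} : Finset (Fin n)), π i (σ 1) ≤ π i y)
        = univ.filter fun i : Fin d => π i (σ 1) < π i (σ 0) ∧ π i (σ 1) < π i (σ 2) := by
      refine Finset.filter_congr fun i _ => ?_
      simp only [Finset.mem_insert, Finset.mem_singleton, forall_eq_or_imp, forall_eq]
      constructor
      · rintro ⟨-, ha, hb⟩
        exact ⟨lt_of_le_of_ne ha (perm_ne' (π i) h01.symm),
          lt_of_le_of_ne hb (perm_ne' (π i) h12)⟩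
      · rintro ⟨ha, hb⟩; exact ⟨le_refl _, le_of_lt ha, le_of_lt hb⟩
    rw [etri] at htri
    rw [lemB π h02] at htri
    rw [lemA π h12 (Ne.symm h01) (Ne.symm h02)] at hpair
    show Cc π (σ 0) (σ 1) (σ 2) * 6 = d
    omega
  · intro h j hj1 hj3 X hX x hx
    interval_cases j
    · -- j = 1 : X = {x}
      obtain ⟨a, rfl⟩ := Finset.card_eq_one.mp hX
      obtain rfl : x = a := by simpa using hx
      have : (univ.filter fun i : Fin d =>
          ∀ y ∈ ({x} : Finset (Fin n)), π i x ≤ π i y) = univ := by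
        refine Finset.filter_true_of_mem fun i _ => ?_
        simp
      rw [this]
      simp
    · -- j = 2 : X = {x, b}
      have hcb : (X.erase x).card = 1 := by rw [Finset.card_erase_of_mem hx, hX]
      obtain ⟨b, hb⟩ := Finset.card_eq_one.mp hcb
      have hbx : b ≠ x := by
        have : b ∈ X.erase x := by rw [hb]; exact Finset.mem_singleton_self b
        exact (Finset.mem_erase.mp this).1
      have hXe : X = {x, b} := by
        rw [← Finset.insert_erase hx, hb]
      -- pick a third element c
      have hc : ∃ c : Fin n, c ∉ ({x, b} : Finset (Fin n)) := by
        by_contra hcon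
        push_neg at hcon
        have : (univ : Finset (Fin n)).card ≤ ({x, b} : Finset (Fin n)).card :=
          Finset.card_le_card fun z _ => hcon z
        have h2 : ({x, b} : Finset (Fin n)).card ≤ 2 :=
          (Finset.card_insert_le _ _).trans (by simp)
        simp [Finset.card_univ] at this
        omega
      obtain ⟨c, hcmem⟩ := hc
      have hcx : c ≠ x := fun e => hcmem (by simp [e])
      have hcb2 : c ≠ b := fun e => hcmem (by simp [e])
      subst hXe
      have epair : (univ.filter fun i : Fin d =>
          ∀ y ∈ ({x, b} : Finset (Fin n)), π i x ≤ π i y)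
          = univ.filter fun i : Fin d => π i x < π i b := by
        refine Finset.filter_congr fun i _ => ?_
        simp only [Finset.mem_insert, Finset.mem_singleton, forall_eq_or_imp, forall_eq]
        constructor
        · rintro ⟨-, h2⟩; exact lt_of_le_of_ne h2 (perm_ne' (π i) hbx.symm)
        · intro hlt; exact ⟨le_refl _, le_of_lt hlt⟩
      rw [epair, lemA π hbx.symm hcx.symm hcb2.symm]
      have e1 := rank_C π h hcx hcb2 (fun e => hbx (e.symm))
      have e2 := rank_C π h hcx.symm hbx.symm hcb2
      have e3 := rank_C π h hbx.symm hcx.symm hcb2.symm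
      omega
    · -- j = 3 : X = {x, b, c}
      have hcb : (X.erase x).card = 2 := by rw [Finset.card_erase_of_mem hx, hX]
      obtain ⟨b, c, hbc, hbe⟩ := Finset.card_eq_two.mp hcb
      have hbx : b ≠ x := by
        have : b ∈ X.erase x := by rw [hbe]; simp
        exact (Finset.mem_erase.mp this).1
      have hcx : c ≠ x := by
        have : c ∈ X.erase x := by rw [hbe]; simp
        exact (Finset.mem_erase.mp this).1
      have hXe : X = {x, b, c} := by
        rw [← Finset.insert_erase hx, hbe]
      subst hXe
      have etri : (univ.filter fun i : Fin d =>
          ∀ y ∈ ({x, b, c} : Finset (Fin n)), π i x ≤ π i y)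
          = univ.filter fun i : Fin d => π i x < π i b ∧ π i x < π i c := by
        refine Finset.filter_congr fun i _ => ?_
        simp only [Finset.mem_insert, Finset.mem_singleton, forall_eq_or_imp, forall_eq]
        constructor
        · rintro ⟨-, ha, hb2⟩
          exact ⟨lt_of_le_of_ne ha (perm_ne' (π i) hbx.symm),
            lt_of_le_of_ne hb2 (perm_ne' (π i) hcx.symm)⟩
        · rintro ⟨ha, hb2⟩; exact ⟨le_refl _, le_of_lt ha, le_of_lt hb2⟩
      rw [etri, lemB π hbc]
      have e1 := rank_C π h hbx.symm hcx.symm hbc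
      have e2 := rank_C π h hcx.symm hbx.symm hbc.symm
      omega
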